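/- For homotopic cochain maps f, g : C → C of R-module cochain complexes, the algebraic mapping 1-tori T(f) and T(g) are isomorphic as R[z,z^{-1}]-module cochain complexes. -/

import Mathlib

open scoped TensorProduct

noncomputable section

variable (R : Type) [CommRing R]

/-- The Laurent polynomial ring `R[z,z⁻¹]`. -/
abbrev L := LaurentPolynomial R

/-- The indeterminate `z ∈ R[z,z⁻¹]`. -/
noncomputable def zvar : L R := LaurentPolynomial.T 1

variable (C : ℤ → Type) [∀ n, AddCommGroup (C n)] [∀ n, Module R (C n)]

/-- The mapping 1-torus `T(h)` of a degree-zero self map `h` of a cochain complex `C` of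
`R`-modules: the mapping cone of `h ⊗ id − id ⊗ z` on `C ⊗_R R[z,z⁻¹]`, realised with the
Laurent polynomial factor written on the left.  This is its `n`-th term. -/
def torusX (n : ℤ) : Type := (L R ⊗[R] C (n + 1)) × (L R ⊗[R] C n)

instance (n : ℤ) : AddCommGroup (torusX R C n) := by unfold torusX; infer_instance
instance (n : ℤ) : Module (L R) (torusX R C n) := by unfold torusX; infer_instance

/-- The differential of the mapping 1-torus `T(h)`:
`(x, y) ↦ (−(d⊗id) x, (h⊗id − id⊗z) x + (d⊗id) y)`. -/
def torusD (dC : ∀ n, C n →ₗ[R] C (n + 1)) (h : ∀ n, C n →ₗ[R] C n) (n : ℤ) :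
    torusX R C n →ₗ[L R] torusX R C (n + 1) :=
  LinearMap.prod
    (-((LinearMap.baseChange (L R) (dC (n + 1))).comp
        (LinearMap.fst (L R) (L R ⊗[R] C (n + 1)) (L R ⊗[R] C n))))
    (((LinearMap.baseChange (L R) (h (n + 1))
        - LinearMap.lsmul (L R) (L R ⊗[R] C (n + 1)) (zvar R)).comp
        (LinearMap.fst (L R) (L R ⊗[R] C (n + 1)) (L R ⊗[R] C n)))
      + ((LinearMap.baseChange (L R) (dC n)).comp
        (LinearMap.snd (L R) (L R ⊗[R] C (n + 1)) (L R ⊗[R] C n))))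

/-- Shear map `(x, y) ↦ (x, y + (s ⊗ id) x)`. -/
def shear (s : ∀ n, C (n + 1) →ₗ[R] C n) (n : ℤ) : torusX R C n ≃ₗ[L R] torusX R C n where
  toFun p := (p.1, p.2 + LinearMap.baseChange (L R) (s n) p.1)
  invFun p := (p.1, p.2 - LinearMap.baseChange (L R) (s n) p.1)
  map_add' p q := by
    refine Prod.ext rfl ?_
    show p.2 + q.2 + LinearMap.baseChange (L R) (s n) (p.1 + q.1)
        = (p.2 + LinearMap.baseChange (L R) (s n) p.1)
          + (q.2 + LinearMap.baseChange (L R) (s n) q.1)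
    rw [map_add]; abel
  map_smul' c p := by
    refine Prod.ext rfl ?_
    show c • p.2 + LinearMap.baseChange (L R) (s n) (c • p.1)
        = c • (p.2 + LinearMap.baseChange (L R) (s n) p.1)
    rw [map_smul, smul_add]
  left_inv p := by simp; rfl
  right_inv p := by simp; rfl

/-- For homotopic cochain self maps `f, g : C → C` of a cochain complex of `R`-modules, the
mapping 1-tori `T(f)` and `T(g)` are isomorphic as complexes of `R[z,z⁻¹]`-modules. -/
theorem mappingOneTorus_iso_of_homotopic
    (dC : ∀ n, C n →ₗ[R] C (n + 1))
    (hsq : ∀ n (x : C n), dC (n + 1) (dC n x) = 0)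
    (f g : ∀ n, C n →ₗ[R] C n)
    (hf : ∀ n (x : C n), f (n + 1) (dC n x) = dC n (f n x))
    (hg : ∀ n (x : C n), g (n + 1) (dC n x) = dC n (g n x))
    -- a homotopy from `f` to `g`:
    (s : ∀ n, C (n + 1) →ₗ[R] C n)
    (hs : ∀ n (x : C (n + 1)),
      f (n + 1) x - g (n + 1) x = dC n (s n x) + s (n + 1) (dC (n + 1) x)) :
    ∃ e : ∀ n, torusX R C n ≃ₗ[L R] torusX R C n,
      ∀ n (x : torusX R C n),
        e (n + 1) (torusD R C dC f n x) = torusD R C dC g n (e n x) := by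
  refine ⟨fun n => shear R C s n, fun n x => ?_⟩
  obtain ⟨x, y⟩ := x
  have key : f (n + 1) = g (n + 1) + (dC n).comp (s n) + (s (n + 1)).comp (dC (n + 1)) :=
    LinearMap.ext fun v => by
      have := hs n v
      simp only [LinearMap.add_apply, LinearMap.comp_apply]
      rw [sub_eq_iff_eq_add] at this
      rw [this]; abel
  have keyBC : LinearMap.baseChange (L R) (f (n + 1))
      = LinearMap.baseChange (L R) (g (n + 1))
      + (LinearMap.baseChange (L R) (dC n)).comp (LinearMap.baseChange (L R) (s n))
      + (LinearMap.baseChange (L R) (s (n + 1))).comp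
          (LinearMap.baseChange (L R) (dC (n + 1))) := by
    rw [key]
    ext v
    simp [LinearMap.baseChange_comp]
  refine Prod.ext rfl ?_
  show (LinearMap.baseChange (L R) (f (n + 1)) x - zvar R • x
          + LinearMap.baseChange (L R) (dC n) y)
        + LinearMap.baseChange (L R) (s (n + 1)) (-(LinearMap.baseChange (L R) (dC (n + 1)) x))
      = LinearMap.baseChange (L R) (g (n + 1)) x - zvar R • x
          + LinearMap.baseChange (L R) (dC n) (y + LinearMap.baseChange (L R) (s n) x)
  rw [keyBC]
  simp only [LinearMap.add_apply, LinearMap.comp_apply, map_neg, map_add]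
  abel

end
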